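/- Let Y and Y' be two runs of the Blitzstein–Diaconis sequential algorithm (which always selects the minimal-positive-degree vertex, breaking ties by lowest index, and then saturates all of that vertex's remaining edges before moving on) producing the same final graph. Then the sequences of selected vertices i_1,...,i_M coincide, and at each stage k the same set of a_k edges incident to i_k is added (possibly in a different order). Consequently, the number of distinct edge-orderings the algorithm can follow to produce a given output graph equals ∏_{k=1}^M a_k!, where a_k is the residual degree of vertex i_k when it is first selected. -/

import Mathlib

/-- Vertex `i` is the one selected by the Blitzstein–Diaconis algorithm for residual
degree sequence `d`: it has minimal positive residual degree, with ties broken by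
lowest index.  (Note that after an edge incident to the selected vertex is added its
residual degree strictly decreases, so it remains the selected vertex until it is
saturated; thus this selection rule is equivalent to saturating each selected vertex
before moving on.) -/
def IsSel {N : ℕ} (d : Fin N → ℕ) (i : Fin N) : Prop :=
  0 < d i ∧ ∀ j, 0 < d j → d i < d j ∨ (d i = d j ∧ i ≤ j)

/-- Decrease the residual degrees of the two endpoints of a newly added edge by one. -/
def decTwo {N : ℕ} (d : Fin N → ℕ) (i j : Fin N) : Fin N → ℕ :=
  fun k => if k = i ∨ k = j then d k - 1 else d k

/-- A run of the Blitzstein–Diaconis sequential algorithm starting from residual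
degree sequence `d`: the ordered list of edges added (each recorded as
(selected vertex, chosen partner)).  Each added edge must be incident to the currently
selected vertex, join it to a distinct partner of positive residual degree, and not
duplicate an edge added later in the run; the run terminates exactly when all residual
degrees are zero. -/
def ValidRun {N : ℕ} : (Fin N → ℕ) → List (Fin N × Fin N) → Prop
  | d, [] => ∀ j, d j = 0
  | d, e :: Y => IsSel d e.1 ∧ e.2 ≠ e.1 ∧ 0 < d e.2 ∧
      e ∉ Y ∧ (e.2, e.1) ∉ Y ∧ ValidRun (decTwo d e.1 e.2) Y

/-- Two runs `Y` and `Y'` produce the same final graph when they contain the same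
edges up to orientation. -/
def SameGraph {N : ℕ} (Y Y' : List (Fin N × Fin N)) : Prop :=
  ∀ i j : Fin N, ((i, j) ∈ Y ∨ (j, i) ∈ Y) ↔ ((i, j) ∈ Y' ∨ (j, i) ∈ Y')

namespace BD

variable {N : ℕ}

theorem sel_unique {d : Fin N → ℕ} {i j : Fin N} (hi : IsSel d i) (hj : IsSel d j) : i = j := by
  obtain ⟨hi0, hi1⟩ := hi; obtain ⟨hj0, hj1⟩ := hj
  rcases hi1 j hj0 with h | ⟨he, hle⟩ <;> rcases hj1 i hi0 with h' | ⟨he', hle'⟩ <;>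
    first
      | omega
      | exact le_antisymm hle hle'

theorem decTwo_le {d : Fin N → ℕ} {i j : Fin N} (k : Fin N) : decTwo d i j k ≤ d k := by
  unfold decTwo; split <;> omega

theorem decTwo_self {d : Fin N → ℕ} {i j : Fin N} : decTwo d i j i = d i - 1 := by
  simp [decTwo]

theorem decTwo_snd {d : Fin N → ℕ} {i j : Fin N} : decTwo d i j j = d j - 1 := by
  simp [decTwo]

theorem decTwo_other {d : Fin N → ℕ} {i j k : Fin N} (h1 : k ≠ i) (h2 : k ≠ j) :
    decTwo d i j k = d k := by
  simp [decTwo, h1, h2]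

theorem staysSel {d : Fin N → ℕ} {i j : Fin N} (h : IsSel d i) (h2 : 2 ≤ d i) (hj : j ≠ i) :
    IsSel (decTwo d i j) i := by
  obtain ⟨h0, hmin⟩ := h
  constructor
  · rw [decTwo_self]; omega
  · intro k hk
    by_cases hki : k = i
    · subst hki; exact Or.inr ⟨rfl, le_rfl⟩
    by_cases hkj : k = j
    · subst hkj
      rw [decTwo_self]
      rw [decTwo_snd] at hk ⊢
      rcases hmin k (by omega) with h | ⟨he, hle⟩
      · left; omega
      · exact Or.inr ⟨by omega, hle⟩
    · rw [decTwo_self]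
      rw [decTwo_other hki hkj] at hk ⊢
      rcases hmin k hk with h | ⟨he, hle⟩ <;> left <;> omega

theorem valid_count {d : Fin N → ℕ} {Y : List (Fin N × Fin N)} (h : ValidRun d Y) (j : Fin N) :
    d j = Y.countP (fun f => f.1 = j || f.2 = j) := by
  induction Y generalizing d with
  | nil => simpa using h j
  | cons e Y IH =>
    obtain ⟨⟨hs0, -⟩, hne, hpos, -, -, hrest⟩ := h
    have h4 := IH hrest
    rw [List.countP_cons]
    by_cases hj : e.1 = j ∨ e.2 = j
    · have h1 : (decide (e.1 = j) || decide (e.2 = j)) = true := by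
        rcases hj with h | h <;> simp [h]
      have h2 : decTwo d e.1 e.2 j = d j - 1 := by
        unfold decTwo; rw [if_pos (by tauto)]
      have h3 : 0 < d j := by rcases hj with h | h <;> [exact h ▸ hs0; exact h ▸ hpos]
      rw [h1]
      simp only [if_true, reduceCtorEq, if_false]
      omega
    · push_neg at hj
      have h1 : (decide (e.1 = j) || decide (e.2 = j)) = false := by
        simp [hj.1, hj.2]
      have h2 : decTwo d e.1 e.2 j = d j :=
        decTwo_other (fun h => hj.1 h.symm) (fun h => hj.2 h.symm)
      rw [h1]
      simp only [if_true, reduceCtorEq, if_false]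
      omega

end BD
def sat {N : ℕ} (d : Fin N → ℕ) (B : List (Fin N × Fin N)) : Fin N → ℕ :=
  B.foldl (fun d f => decTwo d f.1 f.2) d

namespace BD
variable {N : ℕ}

theorem decTwo_comm (d : Fin N → ℕ) (a b c e : Fin N) :
    decTwo (decTwo d a b) c e = decTwo (decTwo d c e) a b := by
  funext k
  unfold decTwo
  split_ifs <;> omega

theorem sat_perm {B B' : List (Fin N × Fin N)} (h : B.Perm B') (d : Fin N → ℕ) :
    sat d B = sat d B' := by
  induction h generalizing d with
  | nil => rfl
  | cons x _ IH => exact IH _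
  | swap x y l =>
    show sat (decTwo (decTwo d _ _) _ _) l = sat (decTwo (decTwo d _ _) _ _) l
    rw [decTwo_comm]
  | trans _ _ IH1 IH2 => rw [IH1, IH2]

theorem count_zero_not_incident {d : Fin N → ℕ} {Y : List (Fin N × Fin N)} (h : ValidRun d Y)
    {i : Fin N} (hz : d i = 0) : ∀ f ∈ Y, f.1 ≠ i ∧ f.2 ≠ i := by
  have hc := valid_count h i
  rw [hz] at hc
  have := List.countP_eq_zero.mp hc.symm
  intro f hf
  have := this f hf
  simp at this
  exact this

theorem block_decomp {d : Fin N → ℕ} {e : Fin N × Fin N} {Y : List (Fin N × Fin N)}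
    (h : ValidRun d (e :: Y)) :
    ∃ B T, e :: Y = B ++ T ∧ B ≠ [] ∧ B.length = d e.1 ∧
      (∀ f ∈ B, f.1 = e.1) ∧ (∀ f ∈ B, f.2 ≠ e.1) ∧ (∀ f ∈ B, 0 < d f.2) ∧
      (B.map Prod.snd).Nodup ∧
      ValidRun (sat d B) T ∧
      (∀ f ∈ T, f.1 ≠ e.1 ∧ f.2 ≠ e.1) := by
  induction Y generalizing d e with
  | nil =>
    obtain ⟨⟨hs0, -⟩, hne, hpos, -, -, hrest⟩ := h
    have h1 : d e.1 = 1 := by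
      have := hrest e.1
      rw [decTwo_self] at this
      omega
    exact ⟨[e], [], by simp, by simp, by simp [h1], by simp, by simp [hne], by simp [hpos],
      by simp, hrest, by simp⟩
  | cons e' Y' IH =>
    obtain ⟨hsel, hne, hpos, hnm1, hnm2, hrest⟩ := h
    by_cases ha : d e.1 = 1
    · refine ⟨[e], e' :: Y', by simp, by simp, by simp [ha], by simp, by simp [hne],
        by simp [hpos], by simp, hrest, ?_⟩
      exact count_zero_not_incident hrest (by rw [decTwo_self, ha])
    · have h2 : 2 ≤ d e.1 := by have := hsel.1; omega
      have hsel' : IsSel (decTwo d e.1 e.2) e.1 := staysSel hsel h2 hne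
      have hee' : e'.1 = e.1 := sel_unique hrest.1 hsel'
      obtain ⟨B', T', hsplit, -, hlen, hB1, hB2, hB3, hnd, hvr, hTi⟩ := IH hrest
      rw [hee'] at hlen hB1 hB2 hTi
      refine ⟨e :: B', T', by rw [List.cons_append, ← hsplit], by simp, ?_, ?_, ?_, ?_, ?_, hvr, hTi⟩
      · have : decTwo d e.1 e.2 e.1 = d e.1 - 1 := decTwo_self
        simp only [List.length_cons, hlen, this]
        omega
      · intro f hf
        rcases List.mem_cons.mp hf with rfl | hf
        · rfl
        · exact hB1 f hf
      · intro f hf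
        rcases List.mem_cons.mp hf with rfl | hf
        · exact hne
        · exact hB2 f hf
      · intro f hf
        rcases List.mem_cons.mp hf with rfl | hf
        · exact hpos
        · exact lt_of_lt_of_le (hB3 f hf) (decTwo_le f.2)
      · rw [List.map_cons, List.nodup_cons]
        refine ⟨?_, hnd⟩
        intro hmem
        obtain ⟨f, hf, hf2⟩ := List.mem_map.mp hmem
        have hf1 : f.1 = e.1 := hB1 f hf
        have : f = e := Prod.ext hf1 hf2
        subst this
        exact hnm1 (hsplit ▸ List.mem_append_left _ hf)
  -- done
end BD
namespace BD
variable {N : ℕ}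

theorem build_run {i : Fin N} {T : List (Fin N × Fin N)} :
    ∀ {B : List (Fin N × Fin N)} {d : Fin N → ℕ}, IsSel d i → B.length = d i →
    (∀ f ∈ B, f.1 = i) → (∀ f ∈ B, f.2 ≠ i) → (∀ f ∈ B, 0 < d f.2) →
    (B.map Prod.snd).Nodup → ValidRun (sat d B) T → (∀ f ∈ T, f.1 ≠ i ∧ f.2 ≠ i) →
    B ≠ [] → ValidRun d (B ++ T)
  | [], _, _, _, _, _, _, _, _, _, hne => absurd rfl hne
  | e :: B', d, hsel, hlen, hB1, hB2, hB3, hnd, hT, hTi, _ => by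
    have he1 : e.1 = i := hB1 e (List.mem_cons_self)
    have he2 : e.2 ≠ i := hB2 e (List.mem_cons_self)
    rw [List.cons_append]
    refine ⟨he1 ▸ hsel, he1 ▸ he2, hB3 e (List.mem_cons_self), ?_, ?_, ?_⟩
    · rw [List.mem_append]
      rintro (hmB | hmT)
      · rw [List.map_cons, List.nodup_cons] at hnd
        exact hnd.1 (List.mem_map.mpr ⟨e, hmB, rfl⟩)
      · exact (hTi e hmT).1 he1
    · rw [List.mem_append]
      rintro (hmB | hmT)
      · exact he2 (hB1 _ (List.mem_cons_of_mem _ hmB))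
      · exact (hTi _ hmT).2 he1
    · rcases List.eq_nil_or_concat B' with rfl | hne'
      · exact hT
      · have hne' : B' ≠ [] := by rcases hne' with ⟨_, _, rfl⟩; simp
        rw [List.map_cons, List.nodup_cons] at hnd
        have h2 : 2 ≤ d i := by
          rw [← hlen]
          have := List.length_pos_iff.mpr hne'
          simp only [List.length_cons]
          omega
        have hsel2 : IsSel (decTwo d i e.2) i := staysSel hsel h2 he2
        have key : ValidRun (decTwo d i e.2) (B' ++ T) := by
          refine build_run hsel2 ?_ (fun f hf => hB1 f (List.mem_cons_of_mem _ hf))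
            (fun f hf => hB2 f (List.mem_cons_of_mem _ hf)) ?_ hnd.2 ?_ hTi hne'
          · rw [decTwo_self]
            have : (e :: B').length = d i := hlen
            simp only [List.length_cons] at this
            omega
          · intro f hf
            have : f.2 ≠ e.2 := fun hc => hnd.1 (hc ▸ List.mem_map.mpr ⟨f, hf, rfl⟩)
            rw [decTwo_other (hB2 f (List.mem_cons_of_mem _ hf)) this]
            exact hB3 f (List.mem_cons_of_mem _ hf)
          · have : sat (decTwo d i e.2) B' = sat d (e :: B') := by
              show sat (decTwo d i e.2) B' = sat (decTwo d e.1 e.2) B'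
              rw [he1]
            rw [this]
            exact hT
        rw [he1]
        exact key

theorem splitBy_loop_append {α : Type*} {r : α → α → Bool} {l : List α} {a : α} {g : List α}
    (gs : List (List α)) :
    List.splitBy.loop r l a g gs = gs.reverse ++ List.splitBy.loop r l a g [] := by
  induction l generalizing a g gs with
  | nil => simp [List.splitBy.loop]
  | cons b l IH =>
    simp_rw [List.splitBy.loop]
    split <;> rw [IH]
    conv_rhs => rw [IH]
    simp

theorem splitBy_loop_eq {α β : Type*} (f : α → β) [DecidableEq β] (i : β) :
    ∀ (B' : List α) (T : List α) (a : α) (g : List α), f a = i → (∀ x ∈ g, f x = i) →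
    (∀ x ∈ B', f x = i) → (∀ t ∈ T.head?, f t ≠ i) →
    List.splitBy.loop (fun a b => f a == f b) (B' ++ T) a g [] =
      (g.reverse ++ a :: B') :: List.splitBy (fun a b => f a == f b) T
  | [], [], a, g, _, _, _, _ => by
    simp [List.splitBy.loop, List.splitBy]
  | [], t :: ts, a, g, ha, hg, _, hT => by
    have hft : f t ≠ i := hT t rfl
    have : (f a == f t) = false := by
      simp only [beq_eq_false_iff_ne, ne_eq]
      rw [ha]; exact fun hc => hft hc.symm
    rw [List.nil_append, List.splitBy.loop, this]
    show List.splitBy.loop _ ts t [] [(a :: g).reverse] = _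
    rw [splitBy_loop_append [(a :: g).reverse]]
    show _ = (g.reverse ++ [a]) :: List.splitBy.loop _ ts t [] []
    simp
  | b :: B', T, a, g, ha, hg, hB, hT => by
    have : (f a == f b) = true := by
      simp only [beq_iff_eq]
      rw [ha, hB b (List.mem_cons_self)]
    rw [List.cons_append, List.splitBy.loop, this]
    have IH := splitBy_loop_eq f i B' T b (a :: g)
      (hB b (List.mem_cons_self))
      (by intro x hx; rcases List.mem_cons.mp hx with rfl | hx; exacts [ha, hg x hx])
      (fun x hx => hB x (List.mem_cons_of_mem _ hx)) hT
    rw [IH]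
    simp

theorem splitBy_block {α β : Type*} (f : α → β) [DecidableEq β] (i : β)
    {B T : List α} (hB : B ≠ []) (hBi : ∀ x ∈ B, f x = i) (hT : ∀ t ∈ T.head?, f t ≠ i) :
    List.splitBy (fun a b => f a == f b) (B ++ T) = B :: List.splitBy (fun a b => f a == f b) T := by
  obtain ⟨b, B', rfl⟩ := List.exists_cons_of_ne_nil hB
  rw [List.cons_append]
  show List.splitBy.loop _ (B' ++ T) b [] [] = _
  rw [splitBy_loop_eq f i B' T b [] (hBi b (List.mem_cons_self)) (by simp)
    (fun x hx => hBi x (List.mem_cons_of_mem _ hx)) hT]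
  simp

end BD
namespace BD
variable {N : ℕ}

theorem run_nil {d : Fin N → ℕ} (h : ValidRun d []) {Y : List (Fin N × Fin N)}
    (hv : ValidRun d Y) : Y = [] := by
  cases Y with
  | nil => rfl
  | cons f Yr =>
    obtain ⟨⟨hpos, -⟩, -⟩ := hv
    have : d f.1 = 0 := h f.1
    omega

theorem main_nil {d : Fin N → ℕ} (h₀ : ValidRun d ([] : List (Fin N × Fin N))) :
    (∀ Y : List (Fin N × Fin N), ValidRun d Y → SameGraph Y [] →
      List.Forall₂ List.Perm
        (Y.splitBy (fun a b => a.1 == b.1))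
        (List.splitBy (fun a b => a.1 == b.1) [])) ∧
    Set.ncard {Y : List (Fin N × Fin N) | ValidRun d Y ∧ SameGraph Y []} =
      ((List.splitBy (fun a b => a.1 == b.1) ([] : List (Fin N × Fin N))).map
        (fun block => Nat.factorial block.length)).prod := by
  constructor
  · intro Y hv _
    rw [run_nil h₀ hv]
    exact List.Forall₂.nil
  · have hset : {Y : List (Fin N × Fin N) | ValidRun d Y ∧ SameGraph Y []} = {[]} := by
      ext Y
      constructor
      · rintro ⟨hv, -⟩; exact run_nil h₀ hv
      · rintro rfl; exact ⟨h₀, fun i j => Iff.rfl⟩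
    rw [hset]
    simp

theorem partners_iff {i : Fin N} {B T Y : List (Fin N × Fin N)} (hsplit : Y = B ++ T)
    (hB1 : ∀ f ∈ B, f.1 = i) (hB2 : ∀ f ∈ B, f.2 ≠ i) (hTi : ∀ f ∈ T, f.1 ≠ i ∧ f.2 ≠ i)
    (j : Fin N) : j ∈ B.map Prod.snd ↔ ((i, j) ∈ Y ∨ (j, i) ∈ Y) := by
  subst hsplit
  constructor
  · intro hm
    obtain ⟨f, hf, rfl⟩ := List.mem_map.mp hm
    left
    have hfe : f = (i, f.2) := Prod.ext (hB1 f hf) rfl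
    exact List.mem_append_left _ (hfe ▸ hf)
  · rintro (hm | hm) <;> rw [List.mem_append] at hm <;> rcases hm with hm | hm
    · exact List.mem_map.mpr ⟨(i, j), hm, rfl⟩
    · exact absurd rfl ((hTi _ hm).1)
    · exact absurd rfl (hB2 _ hm)
    · exact absurd rfl ((hTi _ hm).2)

theorem blocks_perm {i : Fin N} {B T Y B₀ T₀ Y₀ : List (Fin N × Fin N)}
    (hsg : SameGraph Y Y₀)
    (hsplit : Y = B ++ T) (hB1 : ∀ f ∈ B, f.1 = i) (hB2 : ∀ f ∈ B, f.2 ≠ i)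
    (hnd : (B.map Prod.snd).Nodup) (hTi : ∀ f ∈ T, f.1 ≠ i ∧ f.2 ≠ i)
    (hsplit₀ : Y₀ = B₀ ++ T₀) (hB1₀ : ∀ f ∈ B₀, f.1 = i) (hB2₀ : ∀ f ∈ B₀, f.2 ≠ i)
    (hnd₀ : (B₀.map Prod.snd).Nodup) (hTi₀ : ∀ f ∈ T₀, f.1 ≠ i ∧ f.2 ≠ i) :
    B.Perm B₀ := by
  have hmem : ∀ j, j ∈ B.map Prod.snd ↔ j ∈ B₀.map Prod.snd := fun j =>
    (partners_iff hsplit hB1 hB2 hTi j).trans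
      ((hsg i j).trans (partners_iff hsplit₀ hB1₀ hB2₀ hTi₀ j).symm)
  have hp : (B.map Prod.snd).Perm (B₀.map Prod.snd) :=
    (List.perm_ext_iff_of_nodup hnd hnd₀).mpr hmem
  have hmap : ∀ (C : List (Fin N × Fin N)), (∀ f ∈ C, f.1 = i) →
      List.map (fun j => (i, j)) (C.map Prod.snd) = C := by
    intro C hC
    rw [List.map_map]
    have : ∀ f ∈ C, ((fun j => (i, j)) ∘ Prod.snd) f = id f := by
      intro f hf
      show (i, f.2) = f
      exact Prod.ext (hC f hf).symm rfl
    rw [List.map_congr_left this, List.map_id]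
  have := hp.map (fun j => (i, j))
  rwa [hmap B hB1, hmap B₀ hB1₀] at this

theorem tail_sameGraph {i : Fin N} {B T Y B₀ T₀ Y₀ : List (Fin N × Fin N)}
    (hsg : SameGraph Y Y₀)
    (hsplit : Y = B ++ T) (hB1 : ∀ f ∈ B, f.1 = i) (hTi : ∀ f ∈ T, f.1 ≠ i ∧ f.2 ≠ i)
    (hsplit₀ : Y₀ = B₀ ++ T₀) (hB1₀ : ∀ f ∈ B₀, f.1 = i) (hTi₀ : ∀ f ∈ T₀, f.1 ≠ i ∧ f.2 ≠ i) :
    SameGraph T T₀ := by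
  intro j k
  by_cases hj : j = i
  · subst hj
    constructor <;> rintro (hm | hm) <;>
      first
        | exact absurd rfl (hTi _ hm).1
        | exact absurd rfl (hTi _ hm).2
        | exact absurd rfl (hTi₀ _ hm).1
        | exact absurd rfl (hTi₀ _ hm).2
  · by_cases hk : k = i
    · subst hk
      constructor <;> rintro (hm | hm) <;>
        first
          | exact absurd rfl (hTi _ hm).1
          | exact absurd rfl (hTi _ hm).2
          | exact absurd rfl (hTi₀ _ hm).1
          | exact absurd rfl (hTi₀ _ hm).2
    · have e1 : (j, k) ∈ Y ↔ (j, k) ∈ T := by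
        rw [hsplit, List.mem_append]
        constructor
        · rintro (hm | hm)
          · exact absurd (hB1 _ hm) hj
          · exact hm
        · exact Or.inr
      have e2 : (k, j) ∈ Y ↔ (k, j) ∈ T := by
        rw [hsplit, List.mem_append]
        constructor
        · rintro (hm | hm)
          · exact absurd (hB1 _ hm) hk
          · exact hm
        · exact Or.inr
      have e3 : (j, k) ∈ Y₀ ↔ (j, k) ∈ T₀ := by
        rw [hsplit₀, List.mem_append]
        constructor
        · rintro (hm | hm)
          · exact absurd (hB1₀ _ hm) hj
          · exact hm
        · exact Or.inr
      have e4 : (k, j) ∈ Y₀ ↔ (k, j) ∈ T₀ := by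
        rw [hsplit₀, List.mem_append]
        constructor
        · rintro (hm | hm)
          · exact absurd (hB1₀ _ hm) hk
          · exact hm
        · exact Or.inr
      have := hsg j k
      tauto

end BD
namespace BD
variable {N : ℕ}

set_option maxHeartbeats 1000000 in
theorem main : ∀ (n : ℕ) (d : Fin N → ℕ) (Y₀ : List (Fin N × Fin N)),
    Y₀.length ≤ n → ValidRun d Y₀ →
    (∀ Y : List (Fin N × Fin N), ValidRun d Y → SameGraph Y Y₀ →
      List.Forall₂ List.Perm
        (Y.splitBy (fun a b => a.1 == b.1))
        (Y₀.splitBy (fun a b => a.1 == b.1))) ∧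
    Set.ncard {Y : List (Fin N × Fin N) | ValidRun d Y ∧ SameGraph Y Y₀} =
      ((Y₀.splitBy (fun a b => a.1 == b.1)).map
        (fun block => Nat.factorial block.length)).prod := by
  intro n
  induction n with
  | zero =>
    intro d Y₀ hl h₀
    rw [List.length_eq_zero_iff.mp (Nat.le_zero.mp hl)] at h₀ ⊢
    exact main_nil h₀
  | succ m IH =>
    intro d Y₀ hl h₀
    cases Y₀ with
    | nil => exact main_nil h₀
    | cons e₀ Y₀' =>
    obtain ⟨B₀, T₀, hsplit₀, hBne₀, hlen₀, hB1₀, hB2₀, hB3₀, hnd₀, hvr₀, hTi₀⟩ := block_decomp h₀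
    set i := e₀.1 with hi
    set d' := sat d B₀ with hd'
    have hsel₀ : IsSel d i := h₀.1
    have hBpos : 0 < B₀.length := List.length_pos_iff.mpr hBne₀
    have hTlen : T₀.length ≤ m := by
      have hc := congrArg List.length hsplit₀
      rw [List.length_append, List.length_cons] at hc
      rw [List.length_cons] at hl
      omega
    obtain ⟨IH1, IH2⟩ := IH d' T₀ hTlen hvr₀
    have hd'i : d' i = 0 := by
      rw [valid_count hvr₀ i, List.countP_eq_zero]
      intro f hf
      have := hTi₀ f hf
      simp [this.1, this.2]
    -- key decomposition of an arbitrary equivalent run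
    have key : ∀ Y : List (Fin N × Fin N), ValidRun d Y → SameGraph Y (e₀ :: Y₀') →
        ∃ B T, Y = B ++ T ∧ B.Perm B₀ ∧ ValidRun d' T ∧ SameGraph T T₀ ∧
          (∀ f ∈ B, f.1 = i) ∧ (∀ f ∈ T, f.1 ≠ i ∧ f.2 ≠ i) ∧ B ≠ [] := by
      intro Y hv hsg
      cases Y with
      | nil =>
        exfalso
        have he₀ : (i, e₀.2) ∈ e₀ :: Y₀' := by simp [hi]
        rcases (hsg i e₀.2).mpr (Or.inl he₀) with hm | hm <;> exact List.not_mem_nil hm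
      | cons e Y' =>
        obtain ⟨B, T, hsplit, hBne, hlen, hB1, hB2, hB3, hnd, hvr, hTi⟩ := block_decomp hv
        have hei : e.1 = i := sel_unique hv.1 hsel₀
        rw [hei] at hlen hB1 hB2 hTi
        have hperm : B.Perm B₀ :=
          blocks_perm hsg hsplit hB1 hB2 hnd hTi hsplit₀ hB1₀ hB2₀ hnd₀ hTi₀
        have hsat : sat d B = d' := by rw [hd', sat_perm hperm]
        refine ⟨B, T, hsplit, hperm, hsat ▸ hvr, ?_, hB1, hTi, hBne⟩
        exact tail_sameGraph hsg hsplit hB1 hTi hsplit₀ hB1₀ hTi₀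
    have hheadT₀ : ∀ t ∈ T₀.head?, t.1 ≠ i := by
      intro t ht
      exact (hTi₀ t (List.mem_of_mem_head? ht)).1
    have hsplitBy₀ : (e₀ :: Y₀').splitBy (fun a b => a.1 == b.1) =
        B₀ :: T₀.splitBy (fun a b => a.1 == b.1) := by
      rw [hsplit₀]
      exact splitBy_block Prod.fst i hBne₀ hB1₀ hheadT₀
    constructor
    · -- Forall₂ part
      intro Y hv hsg
      obtain ⟨B, T, hsplit, hperm, hvT, hsgT, hB1, hTi, hBne⟩ := key Y hv hsg
      rw [hsplit, hsplitBy₀,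
        splitBy_block Prod.fst i hBne hB1 (fun t ht => (hTi t (List.mem_of_mem_head? ht)).1)]
      exact List.Forall₂.cons hperm (IH1 T hvT hsgT)
    · -- counting part
      have hset : {Y : List (Fin N × Fin N) | ValidRun d Y ∧ SameGraph Y (e₀ :: Y₀')} =
          (fun p : List (Fin N × Fin N) × List (Fin N × Fin N) => p.1 ++ p.2) ''
            ({B | B.Perm B₀} ×ˢ {T | ValidRun d' T ∧ SameGraph T T₀}) := by
        ext Y
        constructor
        · rintro ⟨hv, hsg⟩
          obtain ⟨B, T, hsplit, hperm, hvT, hsgT, -, -, -⟩ := key Y hv hsg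
          exact ⟨(B, T), ⟨hperm, hvT, hsgT⟩, hsplit.symm⟩
        · rintro ⟨⟨B, T⟩, ⟨hBp, hvT, hsgT⟩, rfl⟩
          simp only [Set.mem_setOf_eq] at hvT hsgT
          have hTi : ∀ f ∈ T, f.1 ≠ i ∧ f.2 ≠ i := count_zero_not_incident hvT hd'i
          constructor
          · show ValidRun d (B ++ T)
            refine build_run hsel₀ ?_ (fun f hf => hB1₀ f (hBp.subset hf))
              (fun f hf => hB2₀ f (hBp.subset hf)) (fun f hf => hB3₀ f (hBp.subset hf))
              (((hBp.map Prod.snd)).nodup_iff.mpr hnd₀) ?_ hTi ?_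
            · rw [hBp.length_eq, hlen₀]
            · rw [sat_perm hBp]; exact hvT
            · intro hc
              rw [hc] at hBp
              exact hBne₀ hBp.nil_eq.symm
          · show SameGraph (B ++ T) (e₀ :: Y₀')
            intro j k
            rw [hsplit₀]
            simp only [List.mem_append]
            have h1 := hBp.mem_iff (a := (j, k))
            have h2 := hBp.mem_iff (a := (k, j))
            have h3 := hsgT j k
            tauto
      rw [hset]
      have hinj : Set.InjOn (fun p : List (Fin N × Fin N) × List (Fin N × Fin N) => p.1 ++ p.2)
          ({B | B.Perm B₀} ×ˢ {T | ValidRun d' T ∧ SameGraph T T₀}) := by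
        rintro ⟨B1, T1⟩ ⟨hp1, -⟩ ⟨B2, T2⟩ ⟨hp2, -⟩ heq
        simp only at heq
        have hlen12 : B1.length = B2.length := by
          rw [hp1.length_eq, hp2.length_eq]
        obtain ⟨h1, h2⟩ := List.append_inj heq hlen12
        rw [h1, h2]
      rw [Set.ncard_image_of_injOn hinj]
      have hprod : ({B : List (Fin N × Fin N) | B.Perm B₀} ×ˢ
            {T : List (Fin N × Fin N) | ValidRun d' T ∧ SameGraph T T₀}).ncard =
          {B : List (Fin N × Fin N) | B.Perm B₀}.ncard *
            {T : List (Fin N × Fin N) | ValidRun d' T ∧ SameGraph T T₀}.ncard := by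
        rw [← Nat.card_coe_set_eq, ← Nat.card_coe_set_eq, ← Nat.card_coe_set_eq,
          ← Nat.card_prod]
        exact Nat.card_congr (Equiv.Set.prod _ _)
      have hndB₀ : B₀.Nodup := List.Nodup.of_map _ hnd₀
      have hS1 : {B : List (Fin N × Fin N) | B.Perm B₀}.ncard = Nat.factorial B₀.length := by
        have : {B : List (Fin N × Fin N) | B.Perm B₀} = ↑(B₀.permutations.toFinset) := by
          ext B; simp [List.mem_permutations]
        rw [this, Set.ncard_coe_finset,
          List.toFinset_card_of_nodup (List.nodup_permutations _ hndB₀),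
          List.length_permutations]
      rw [hprod, hS1, IH2, hsplitBy₀, List.map_cons, List.prod_cons]

end BD


/-- (Blitzstein–Diaconis run counting) Any two runs of the sequential algorithm that
produce the same final graph select the same sequence of vertices and add the same
set of edges at each stage, possibly in a different order: grouping the edge lists
into consecutive stages (maximal blocks of edges sharing the same selected vertex),
corresponding stages are permutations of one another.  Consequently, the number of
distinct runs producing a given output graph equals `∏_k a_k!`, where `a_k` is the
number of edges added at stage `k` (the residual degree of the `k`-th selected vertex
at the moment of its selection). -/
theorem blitzstein_diaconis_run_count {N : ℕ} (d : Fin N → ℕ)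
    (Y₀ : List (Fin N × Fin N)) (h₀ : ValidRun d Y₀) :
    (∀ Y : List (Fin N × Fin N), ValidRun d Y → SameGraph Y Y₀ →
      List.Forall₂ List.Perm
        (Y.splitBy (fun a b => a.1 == b.1))
        (Y₀.splitBy (fun a b => a.1 == b.1))) ∧
    Set.ncard {Y : List (Fin N × Fin N) | ValidRun d Y ∧ SameGraph Y Y₀} =
      ((Y₀.splitBy (fun a b => a.1 == b.1)).map
        (fun block => Nat.factorial block.length)).prod :=
  BD.main Y₀.length d Y₀ le_rfl h₀
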